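/- arXiv:2208.11115 — 3 statements merged into one kernel-verified Lean document; each statement's English description precedes it below -/
import Mathlib

section
/- Let G be an additive commutative group and let c : Fin r → G be a finite family of elements, with N the additive submonoid of G generated by the c i. Then for every subset V of (the underlying set of) N there exists a finite subset F ⊆ V such that for every v ∈ V there is some f ∈ F with v − f ∈ N. -/
/-- Dickson-type finiteness: any subset `V` of the submonoid `N` generated by a
finite family `c : Fin r → G` admits a finite subset `F ⊆ V` such that every
element of `V` dominates some element of `F` in the preorder induced by `N`. -/
theorem stmt0 {G : Type*} [AddCommGroup G] {r : ℕ} (c : Fin r → G)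
    (N : AddSubmonoid G) (hN : N = AddSubmonoid.closure (Set.range c))
    (V : Set G) (hV : V ⊆ (N : Set G)) :
    ∃ F : Finset G, ↑F ⊆ V ∧ ∀ v ∈ V, ∃ f ∈ F, v - f ∈ N := by
  classical
  set φ : (Fin r → ℕ) → G := fun a => ∑ i, a i • c i with hφ
  have hφadd : ∀ a b, φ (a + b) = φ a + φ b := by
    intro a b
    simp only [hφ, Pi.add_apply, add_smul, Finset.sum_add_distrib]
  have hmem : ∀ v ∈ N, ∃ a, φ a = v := by
    intro v hv
    rw [hN] at hv
    induction hv using AddSubmonoid.closure_induction with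
    | mem x hx =>
      obtain ⟨i, rfl⟩ := hx
      exact ⟨Pi.single i 1, by simp [hφ, Pi.single_apply, Finset.sum_ite_eq']⟩
    | zero => exact ⟨0, by simp [hφ]⟩
    | add x y _ _ hx hy =>
      obtain ⟨a, rfl⟩ := hx
      obtain ⟨b, rfl⟩ := hy
      exact ⟨a + b, hφadd a b⟩
  have hφmem : ∀ a, φ a ∈ N := by
    intro a
    rw [hN]
    exact AddSubmonoid.sum_mem _ fun i _ =>
      AddSubmonoid.nsmul_mem _ (AddSubmonoid.subset_closure (Set.mem_range_self i)) (a i)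
  have hφsub : ∀ a b : Fin r → ℕ, b ≤ a → φ a - φ b = φ (a - b) := by
    intro a b hba
    have : φ (a - b) + φ b = φ a := by
      rw [← hφadd]; congr 1; funext i
      exact tsub_add_cancel_of_le (hba i)
    rw [← this]; abel
  by_contra hcon
  push_neg at hcon
  set pick : Finset G → G := fun F =>
    if h : ↑F ⊆ V then (hcon F h).choose else 0 with hpick
  have hpickV : ∀ F : Finset G, (h : ↑F ⊆ V) → pick F ∈ V ∧ ∀ f ∈ F, pick F - f ∉ N := by
    intro F h
    rw [hpick]; simp only [dif_pos h]
    exact ⟨(hcon F h).choose_spec.1, (hcon F h).choose_spec.2⟩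
  set Fs : ℕ → Finset G := fun n => Nat.rec ∅ (fun _ F => insert (pick F) F) n with hFs
  have hFsV : ∀ n, ↑(Fs n) ⊆ V := by
    intro n
    induction n with
    | zero => simp [hFs]
    | succ n ih =>
      intro x hx
      simp only [hFs, Finset.coe_insert, Set.mem_insert_iff] at hx
      rcases hx with rfl | hx
      · exact (hpickV _ ih).1
      · exact ih hx
  set g : ℕ → G := fun n => pick (Fs n) with hg
  have hgmem : ∀ m n, m < n → g m ∈ Fs n := by
    intro m n hmn
    induction n with
    | zero => omega
    | succ n ih =>
      rcases Nat.lt_succ_iff_lt_or_eq.mp hmn with h | rfl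
      · exact Finset.mem_insert_of_mem (ih h)
      · exact Finset.mem_insert_self _ _
  have hgV : ∀ n, g n ∈ V := fun n => (hpickV _ (hFsV n)).1
  -- choose representatives
  choose a ha using fun n => hmem (g n) (hV (hgV n))
  haveI : IsWellOrder ℕ (fun x1 x2 : ℕ => x1 < x2) := inferInstance
  obtain ⟨m, n, hmn, hle⟩ := wellQuasiOrdered_le (α := Fin r → ℕ) a
  have : g n - g m ∈ N := by
    rw [← ha n, ← ha m, hφsub _ _ hle]
    exact hφmem _
  exact (hpickV _ (hFsV n)).2 (g m) (hgmem m n hmn) this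
end

section
/- Let G be an additive commutative group and let c : Fin r → G be a finite family of elements, with N the additive submonoid of G generated by the c i. Call an element v of a subset V ⊆ G a minimal element of V (with respect to the preorder induced by N) if every w ∈ V with v − w ∈ N satisfies w = v. Then for every subset V of (the underlying set of) N, the set of minimal elements of V is finite. -/
/-- Every element of the closure of the range of `c : Fin r → G` is a sum `∑ aᵢ • cᵢ`. -/
lemma exists_rep {G : Type*} [AddCommGroup G] {r : ℕ} (c : Fin r → G) {v : G}
    (hv : v ∈ AddSubmonoid.closure (Set.range c)) :
    ∃ a : Fin r → ℕ, ∑ i, a i • c i = v := by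
  induction hv using AddSubmonoid.closure_induction with
  | mem x hx =>
    obtain ⟨i, rfl⟩ := hx
    exact ⟨Pi.single i 1, by simp [Pi.single_apply, Finset.sum_ite_eq']⟩
  | zero => exact ⟨0, by simp⟩
  | add x y _ _ hx hy =>
    obtain ⟨a, ha⟩ := hx
    obtain ⟨b, hb⟩ := hy
    exact ⟨a + b, by simp [add_nsmul, Finset.sum_add_distrib, ha, hb]⟩

/-- A subset `V` of the submonoid `N` generated by a finite family `c : Fin r → G`
has only finitely many minimal elements with respect to the preorder induced by `N`
(`a ≤ b` iff `b - a ∈ N`). -/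
theorem stmt1 {G : Type*} [AddCommGroup G] {r : ℕ} (c : Fin r → G)
    (N : AddSubmonoid G) (hN : N = AddSubmonoid.closure (Set.range c))
    (V : Set G) (hV : V ⊆ (N : Set G)) :
    {v ∈ V | ∀ w ∈ V, v - w ∈ N → w = v}.Finite := by
  set S := {v ∈ V | ∀ w ∈ V, v - w ∈ N → w = v} with hS
  -- choose representations
  have hrep : ∀ v ∈ S, ∃ a : Fin r → ℕ, ∑ i, a i • c i = v := by
    intro v hv
    exact exists_rep c (hN ▸ hV hv.1)
  choose! f hf using hrep
  -- key: from f v ≤ f w (pointwise) and v, w ∈ S, deduce v = w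
  have key : ∀ v ∈ S, ∀ w ∈ S, f v ≤ f w → v = w := by
    intro v hv w hw hle
    have ha := hf v hv
    have hb := hf w hw
    set a := f v with haa
    set b := f w with hbb
    have hdiff : w - v = ∑ i, (b i - a i) • c i := by
      rw [eq_comm, eq_sub_iff_add_eq, ← ha, ← hb, ← Finset.sum_add_distrib]
      refine Finset.sum_congr rfl fun i _ => ?_
      rw [← add_nsmul, Nat.sub_add_cancel (hle i)]
    have hmem : w - v ∈ N := by
      rw [hdiff, hN]
      exact sum_mem fun i _ =>
        AddSubmonoid.nsmul_mem _ (AddSubmonoid.subset_closure (Set.mem_range_self i)) _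
    exact hw.2 v hv.1 hmem
  -- the images form an antichain
  have hanti : IsAntichain (· ≤ ·) (f '' S) := by
    rintro _ ⟨v, hv, rfl⟩ _ ⟨w, hw, rfl⟩ hne hle
    exact hne (by rw [key v hv w hw hle])
  have hfin : (f '' S).Finite :=
    hanti.finite_of_partiallyWellOrderedOn (Set.isPWO_of_wellQuasiOrderedLE (f '' S))
  refine Set.Finite.of_finite_image hfin ?_
  intro v hv w hw h
  rw [← hf v hv, ← hf w hw, h]
end

section
/- Let S be a commutative ring, f : Fin s → S a finite family of elements, and I = Ideal.span (Set.range f). Let φ : MvPolynomial (Fin s) S →ₐ[S] Polynomial S be the S-algebra homomorphism sending the variable T_i to f i · X, i.e. φ = aeval (fun i => Polynomial.monomial 1 (f i)). Then for every natural number n, the image under φ of the S-submodule of homogeneous polynomials of total degree n equals the image of I^n (viewed as an S-submodule of S) under the S-linear map a ↦ a·X^n; that is, Submodule.map φ.toLinearMap (MvPolynomial.homogeneousSubmodule (Fin s) S n) = Submodule.map (Polynomial.monomial n) (I^n). -/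
open Polynomial

private lemma prod_monomial_aux {S : Type*} [CommRing S] {ι : Type*} (t : Finset ι)
    (e : ι → ℕ) (c : ι → S) :
    (∏ i ∈ t, Polynomial.monomial (e i) (c i))
      = Polynomial.monomial (∑ i ∈ t, e i) (∏ i ∈ t, c i) := by
  induction t using Finset.cons_induction with
  | empty => simp [Polynomial.monomial_zero_one]
  | cons a t ha ih =>
    rw [Finset.prod_cons, ih, Polynomial.monomial_mul_monomial, Finset.sum_cons,
      Finset.prod_cons]

private lemma prod_pow_mem_aux {S : Type*} [CommRing S] {ι : Type*} (I : Ideal S)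
    (t : Finset ι) (d : ι → ℕ) (g : ι → S) (hg : ∀ i, g i ∈ I) :
    (∏ i ∈ t, g i ^ d i) ∈ I ^ (∑ i ∈ t, d i) := by
  induction t using Finset.cons_induction with
  | empty => simp [Ideal.one_eq_top]
  | cons a t ha ih =>
    rw [Finset.prod_cons, Finset.sum_cons, pow_add]
    exact Ideal.mul_mem_mul (Ideal.pow_mem_pow (hg a) _) ih

/-- The graded surjection `R = S[T₁,…,T_s] ↠ S[It]`, `T_i ↦ f_i t`, identifies the
degree-`n` homogeneous part of `R` with `Iⁿ tⁿ`: the image of the homogeneous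
polynomials of degree `n` under `aeval (fun i => f i • X)` equals the image of `Iⁿ`
under `a ↦ a·Xⁿ`. -/
theorem stmt6 {S : Type*} [CommRing S] {s : ℕ} (f : Fin s → S)
    (I : Ideal S) (hI : I = Ideal.span (Set.range f))
    (φ : MvPolynomial (Fin s) S →ₐ[S] Polynomial S)
    (hφ : φ = MvPolynomial.aeval (fun i => Polynomial.monomial 1 (f i)))
    (n : ℕ) :
    Submodule.map φ.toLinearMap (MvPolynomial.homogeneousSubmodule (Fin s) S n)
      = Submodule.map (Polynomial.monomial n) (I ^ n) := by
  have hf : ∀ i, f i ∈ I := fun i => hI ▸ Ideal.subset_span ⟨i, rfl⟩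
  have key : ∀ (d : Fin s →₀ ℕ) (a : S),
      φ (MvPolynomial.monomial d a)
        = Polynomial.monomial d.degree (a * ∏ i ∈ d.support, f i ^ d i) := by
    intro d a
    rw [hφ, MvPolynomial.aeval_monomial, Finsupp.prod]
    have : ∀ i ∈ d.support, (Polynomial.monomial 1 (f i)) ^ d i
        = Polynomial.monomial (d i) (f i ^ d i) := by
      intro i _; rw [Polynomial.monomial_pow, one_mul]
    rw [Finset.prod_congr rfl this, prod_monomial_aux, Finsupp.degree]
    simp [Polynomial.C_mul_monomial, Algebra.algebraMap_self_apply]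
    rfl
  subst hI
  apply le_antisymm
  · rw [Submodule.map_le_iff_le_comap,
      MvPolynomial.homogeneousSubmodule_eq_finsupp_supported,
      AddMonoidAlgebra.supported_eq_span_single, Submodule.span_le]
    rintro p ⟨d, hd, rfl⟩
    have hd' : d.degree = n := hd
    have hsingle : (AddMonoidAlgebra.single d (1 : S) : MvPolynomial (Fin s) S)
        = MvPolynomial.monomial d 1 := rfl
    simp only [SetLike.mem_coe, Submodule.mem_comap, AlgHom.toLinearMap_apply, hsingle, key]
    refine ⟨∏ i ∈ d.support, f i ^ d i, ?_, by rw [one_mul, hd']⟩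
    have := prod_pow_mem_aux (Ideal.span (Set.range f)) d.support d f hf
    rwa [show (∑ i ∈ d.support, d i) = n from hd'] at this
  · rintro q ⟨a, ha, rfl⟩
    induction ha using Submodule.pow_induction_on_left' with
    | algebraMap r =>
      exact ⟨MvPolynomial.C r, MvPolynomial.isHomogeneous_C _ _, by
        simp [hφ, Polynomial.monomial_zero_left]⟩
    | add x y i hx hy ihx ihy =>
      obtain ⟨p, hp, hpe⟩ := ihx
      obtain ⟨q', hq, hqe⟩ := ihy
      exact ⟨p + q', Submodule.add_mem _ hp hq, by
        simp [map_add, hpe, hqe]⟩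
    | mem_mul m hm i x hx ihx =>
      obtain ⟨p, hp, hpe⟩ := ihx
      -- first get a degree-1 preimage of `monomial 1 m`
      have h1 : ∃ q : MvPolynomial (Fin s) S,
          q ∈ MvPolynomial.homogeneousSubmodule (Fin s) S 1
            ∧ φ q = Polynomial.monomial 1 m := by
        induction hm using Submodule.span_induction with
        | mem z hz =>
          obtain ⟨i', rfl⟩ := hz
          exact ⟨MvPolynomial.X i', MvPolynomial.isHomogeneous_X _ _, by
            rw [hφ]; simp⟩
        | zero => exact ⟨0, Submodule.zero_mem _, by simp⟩
        | add z w _ _ ihz ihw =>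
          obtain ⟨p₁, hp₁, he₁⟩ := ihz
          obtain ⟨p₂, hp₂, he₂⟩ := ihw
          exact ⟨p₁ + p₂, Submodule.add_mem _ hp₁ hp₂, by simp [he₁, he₂]⟩
        | smul c z _ ihz =>
          obtain ⟨p₁, hp₁, he₁⟩ := ihz
          exact ⟨c • p₁, Submodule.smul_mem _ _ hp₁, by
            simp [map_smul, he₁, Polynomial.smul_monomial]⟩
      obtain ⟨q', hq, hqe⟩ := h1
      simp only [AlgHom.toLinearMap_apply] at hpe
      refine ⟨p * q', MvPolynomial.IsHomogeneous.mul hp hq, ?_⟩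
      simp only [AlgHom.toLinearMap_apply, map_mul, hqe, hpe,
        Polynomial.monomial_mul_monomial]
      rw [mul_comm x m]
end
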